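/- (Pooled maximizers are almost-everywhere greedy; key step in the proof of Proposition 3.) Let E be a nonempty set and E_obs ⊆ E a finite nonempty subset. Let ν be a σ-finite measure on 𝒳 and suppose that for every e ∈ E the probability measure μ_e on 𝒳 has a ν-a.e. strictly positive density with respect to ν. Let Q : 𝒳 × A → ℝ be bounded measurable. If π* maximizes π ↦ Σ_{e∈E_obs} V(π, μ_e) over all policies, then Σ_{a∈A} π*(a|x) Q(x,a) = max_{a∈A} Q(x,a) for ν-almost every x ∈ 𝒳, and consequently V(π*, μ_e) = ∫_𝒳 max_{a∈A} Q(x,a) dμ_e(x) for every e ∈ E. -/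

import Mathlib

open MeasureTheory

/-- A policy: for each observed context `x`, a probability mass function on the finite
action set `A`, measurable in `x` for each action. -/
structure Policy (𝒳 A : Type*) [MeasurableSpace 𝒳] [Fintype A] where
  prob : 𝒳 → A → ℝ
  nonneg : ∀ x a, 0 ≤ prob x a
  sum_one : ∀ x, ∑ a, prob x a = 1
  measurable : ∀ a, Measurable fun x => prob x a

/-- Value of a policy with respect to a mean-reward function `Q` and a context
distribution `μ`. -/
noncomputable def value {𝒳 A : Type*} [MeasurableSpace 𝒳] [Fintype A]
    (π : Policy 𝒳 A) (Q : 𝒳 → A → ℝ) (μ : Measure 𝒳) : ℝ :=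
  ∫ x, ∑ a, π.prob x a * Q x a ∂μ

/-- Key step in the proof of Proposition 3: a maximizer of the pooled value over the
observed environments is ν-a.e. greedy w.r.t. `Q`, and hence attains the value
`∫ max_a Q(x,a) dμ_e(x)` in every environment. -/
theorem pooled_maximizer_is_ae_greedy
    {𝒳 : Type*} [MeasurableSpace 𝒳] {A : Type*} [Fintype A] [Nonempty A]
    {E : Type*} [Nonempty E] (Eobs : Finset E) (hEobs : Eobs.Nonempty)
    (ν : Measure 𝒳) [SigmaFinite ν]
    (μ : E → Measure 𝒳) (hμ : ∀ e, IsProbabilityMeasure (μ e))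
    (d : E → 𝒳 → ENNReal)
    (hd_meas : ∀ e, Measurable (d e))
    (hd : ∀ e, μ e = ν.withDensity (d e))
    (hd_pos : ∀ e, ∀ᵐ x ∂ν, 0 < d e x)
    (Q : 𝒳 → A → ℝ)
    (hQmeas : ∀ a, Measurable fun x => Q x a)
    (hQbdd : ∃ C, ∀ x a, |Q x a| ≤ C)
    (πstar : Policy 𝒳 A)
    (hmax : ∀ π : Policy 𝒳 A,
      ∑ e ∈ Eobs, value π Q (μ e) ≤ ∑ e ∈ Eobs, value πstar Q (μ e)) :
    (∀ᵐ x ∂ν, ∑ a, πstar.prob x a * Q x a = ⨆ a : A, Q x a) ∧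
      ∀ e, value πstar Q (μ e) = ∫ x, ⨆ a : A, Q x a ∂(μ e) := by
  classical
  obtain ⟨C, hC⟩ := hQbdd
  haveI : ∀ e, IsProbabilityMeasure (μ e) := hμ
  set M : 𝒳 → ℝ := fun x => ⨆ a : A, Q x a with hMdef
  have hMmeas : Measurable M := Measurable.iSup hQmeas
  have hM_att : ∀ x, ∃ a, Q x a = M x := fun x => exists_eq_ciSup_of_finite
  have hbdd : ∀ x, BddAbove (Set.range fun a => Q x a) := fun x =>
    Set.Finite.bddAbove (Set.finite_range _)
  have hle_M : ∀ x a, Q x a ≤ M x := fun x a => le_ciSup (hbdd x) a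
  have hMC : ∀ x, |M x| ≤ C := by
    intro x; obtain ⟨a, ha⟩ := hM_att x; rw [← ha]; exact hC x a
  set S : 𝒳 → ℝ := fun x => ∑ a, πstar.prob x a * Q x a with hSdef
  have hSmeas : Measurable S :=
    Finset.measurable_sum _ fun a _ => (πstar.measurable a).mul (hQmeas a)
  have hS_le : ∀ x, S x ≤ M x := by
    intro x
    calc S x ≤ ∑ a, πstar.prob x a * M x :=
          Finset.sum_le_sum fun a _ =>
            mul_le_mul_of_nonneg_left (hle_M x a) (πstar.nonneg x a)
      _ = M x := by rw [← Finset.sum_mul, πstar.sum_one, one_mul]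
  have hSC : ∀ x, |S x| ≤ C := by
    intro x
    calc |S x| ≤ ∑ a, |πstar.prob x a * Q x a| := Finset.abs_sum_le_sum_abs _ _
      _ ≤ ∑ a, πstar.prob x a * C := by
          refine Finset.sum_le_sum fun a _ => ?_
          rw [abs_mul, abs_of_nonneg (πstar.nonneg x a)]
          exact mul_le_mul_of_nonneg_left (hC x a) (πstar.nonneg x a)
      _ = C := by rw [← Finset.sum_mul, πstar.sum_one, one_mul]
  have hint : ∀ (f : 𝒳 → ℝ), Measurable f → (∀ x, |f x| ≤ C) → ∀ e,
      Integrable f (μ e) := fun f hf hb e =>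
    Integrable.mono' (integrable_const C) hf.aestronglyMeasurable
      (Filter.Eventually.of_forall hb)
  have hSint : ∀ e, Integrable S (μ e) := hint S hSmeas hSC
  have hMint : ∀ e, Integrable M (μ e) := hint M hMmeas hMC
  -- linear order on A and measurable argmax
  letI : LinearOrder A := LinearOrder.lift' (Fintype.equivFin A) (Fintype.equivFin A).injective
  have hne : ∀ x, (Finset.univ.filter fun a => Q x a = M x).Nonempty := by
    intro x; obtain ⟨a, ha⟩ := hM_att x
    exact ⟨a, Finset.mem_filter.2 ⟨Finset.mem_univ a, ha⟩⟩
  set am : 𝒳 → A := fun x => (Finset.univ.filter fun a => Q x a = M x).min' (hne x) with ham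
  have ham_mem : ∀ x, Q x (am x) = M x := fun x =>
    (Finset.mem_filter.1 (Finset.min'_mem _ (hne x))).2
  have ham_eq : ∀ x a, am x = a ↔ (Q x a = M x ∧ ∀ b, Q x b = M x → a ≤ b) := by
    intro x a
    constructor
    · rintro rfl
      exact ⟨ham_mem x, fun b hb =>
        Finset.min'_le _ _ (Finset.mem_filter.2 ⟨Finset.mem_univ b, hb⟩)⟩
    · rintro ⟨h1, h2⟩
      refine le_antisymm (Finset.min'_le _ _ (Finset.mem_filter.2 ⟨Finset.mem_univ a, h1⟩))
        (Finset.le_min' _ _ _ fun b hb => h2 b (Finset.mem_filter.1 hb).2)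
  have ham_set : ∀ a : A, MeasurableSet {x | am x = a} := by
    intro a
    have hEq : {x | am x = a} = {x | Q x a = M x} ∩ ⋂ b, {x | Q x b = M x → a ≤ b} := by
      ext x; simp only [Set.mem_setOf_eq, Set.mem_inter_iff, Set.mem_iInter, ham_eq]
    rw [hEq]
    refine (measurableSet_eq_fun (hQmeas a) hMmeas).inter (MeasurableSet.iInter fun b => ?_)
    by_cases hab : a ≤ b
    · have : {x | Q x b = M x → a ≤ b} = Set.univ := by ext x; simp [hab]
      rw [this]; exact MeasurableSet.univ
    · have : {x | Q x b = M x → a ≤ b} = {x | Q x b = M x}ᶜ := by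
        ext x; simp [hab]
      rw [this]; exact (measurableSet_eq_fun (hQmeas b) hMmeas).compl
  let g : Policy 𝒳 A :=
    { prob := fun x a => if am x = a then 1 else 0
      nonneg := fun x a => by split <;> norm_num
      sum_one := fun x => by simp
      measurable := fun a =>
        Measurable.ite (ham_set a) measurable_const measurable_const }
  have hval_g : ∀ e, value g Q (μ e) = ∫ x, M x ∂(μ e) := by
    intro e
    unfold value
    refine integral_congr_ae (Filter.Eventually.of_forall fun x => ?_)
    show ∑ a, (if am x = a then (1:ℝ) else 0) * Q x a = M x
    rw [← ham_mem x]
    rw [Finset.sum_congr rfl (fun a _ => ite_mul (am x = a) 1 0 (Q x a))]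
    simp [Finset.sum_ite_eq]
  -- nonneg differences sum to ≤ 0
  have hI_eq : ∀ e, (∫ x, (M x - S x) ∂(μ e)) = ∫ x, M x ∂(μ e) - value πstar Q (μ e) := by
    intro e
    rw [integral_sub (hMint e) (hSint e)]; rfl
  have hI_nonneg : ∀ e, 0 ≤ ∫ x, (M x - S x) ∂(μ e) := fun e =>
    integral_nonneg fun x => sub_nonneg.2 (hS_le x)
  have hsum_le : ∑ e ∈ Eobs, (∫ x, (M x - S x) ∂(μ e)) ≤ 0 := by
    have := hmax g
    calc ∑ e ∈ Eobs, (∫ x, (M x - S x) ∂(μ e))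
        = ∑ e ∈ Eobs, (value g Q (μ e) - value πstar Q (μ e)) := by
          refine Finset.sum_congr rfl fun e _ => ?_
          rw [hI_eq e, hval_g e]
      _ = ∑ e ∈ Eobs, value g Q (μ e) - ∑ e ∈ Eobs, value πstar Q (μ e) :=
          Finset.sum_sub_distrib _ _
      _ ≤ 0 := sub_nonpos.2 this
  have hI_zero : ∀ e ∈ Eobs, (∫ x, (M x - S x) ∂(μ e)) = 0 := by
    have hsum0 : ∑ e ∈ Eobs, (∫ x, (M x - S x) ∂(μ e)) = 0 :=
      le_antisymm hsum_le (Finset.sum_nonneg fun e _ => hI_nonneg e)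
    exact fun e he =>
      (Finset.sum_eq_zero_iff_of_nonneg fun e _ => hI_nonneg e).1 hsum0 e he
  obtain ⟨e₀, he₀⟩ := hEobs
  have hae0 : (fun x => M x - S x) =ᵐ[μ e₀] 0 := by
    rw [← integral_eq_zero_iff_of_nonneg (fun x => sub_nonneg.2 (hS_le x))
      ((hMint e₀).sub (hSint e₀))]
    exact hI_zero e₀ he₀
  have hae_e0 : ∀ᵐ x ∂(μ e₀), S x = M x := by
    filter_upwards [hae0] with x hx
    have : M x - S x = 0 := hx
    linarith
  have hac : ν ≪ μ e₀ := by
    rw [hd e₀]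
    exact withDensity_absolutelyContinuous' (hd_meas e₀).aemeasurable
      ((hd_pos e₀).mono fun x hx => ne_of_gt hx)
  have hkey : ∀ᵐ x ∂ν, S x = M x := hac.ae_le hae_e0
  refine ⟨hkey, fun e => ?_⟩
  have hac' : μ e ≪ ν := by
    rw [hd e]; exact withDensity_absolutelyContinuous ν (d e)
  have : ∀ᵐ x ∂(μ e), S x = M x := hac'.ae_le hkey
  exact integral_congr_ae this
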